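/- Let p be a prime, P a subgroup of order p in the symmetric group S_p, and N the normalizer of P in S_p. Then the map N/P → (Z/pZ)^× induced by conjugation action on P is a group isomorphism; in particular there is a split short exact sequence 1 → P → N → (Z/pZ)^× → 1. -/

import Mathlib

open Equiv Subgroup

private lemma aux_pow_val_inj {G : Type*} [Group G] {p : ℕ} [NeZero p] {σ : G}
    (hσ : orderOf σ = p) {a b : ZMod p} (h : σ ^ a.val = σ ^ b.val) : a = b := by
  have h2 := pow_eq_pow_iff_modEq.mp h
  rw [hσ] at h2
  have ha := ZMod.val_lt a
  have hb := ZMod.val_lt b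
  have h3 : a.val % p = b.val % p := h2
  rw [Nat.mod_eq_of_lt ha, Nat.mod_eq_of_lt hb] at h3
  have : a.val = b.val := h3
  exact ZMod.val_injective p this

private lemma aux_exists_zmod_pow {G : Type*} [Group G] {p : ℕ} [NeZero p] {σ : G}
    (hσ : orderOf σ = p) {x : G} (hx : x ∈ Subgroup.zpowers σ) :
    ∃ a : ZMod p, σ ^ a.val = x := by
  obtain ⟨k, rfl⟩ := hx
  refine ⟨(k : ZMod p), ?_⟩
  rw [← zpow_natCast, zpow_eq_zpow_iff_modEq, hσ]
  rw [← ZMod.intCast_eq_intCast_iff]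
  push_cast
  exact ZMod.natCast_rightInverse (k : ZMod p)

private lemma aux_commute_mem_zpowers {p : ℕ} (hp : p.Prime) {σ : Perm (Fin p)}
    (hσ : orderOf σ = p) {τ : Perm (Fin p)} (h : Commute τ σ) :
    τ ∈ Subgroup.zpowers σ := by
  have hc : σ.IsCycle :=
    Equiv.Perm.isCycle_of_prime_order'' (by simpa using hp) (by simpa using hσ)
  have hsupp : ∀ x : Fin p, σ x ≠ x := by
    have hcard : σ.support.card = p := by rw [← hc.orderOf, hσ]
    have huniv : σ.support = Finset.univ :=
      Finset.eq_univ_of_card _ (by simpa using hcard)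
    intro x
    exact Equiv.Perm.mem_support.mp (by rw [huniv]; exact Finset.mem_univ x)
  have hx0 : (0 : ℕ) < p := hp.pos
  set x₀ : Fin p := ⟨0, hx0⟩
  obtain ⟨k, hk⟩ := hc.sameCycle (hsupp x₀) (hsupp (τ x₀))
  set τ' : Perm (Fin p) := (σ ^ k)⁻¹ * τ with hτ'
  have hcomm : Commute τ' σ := ((Commute.refl σ).zpow_left k).inv_left.mul_left h
  have hfix : τ' x₀ = x₀ := by
    rw [hτ', Equiv.Perm.mul_apply, ← hk, ← Equiv.Perm.mul_apply, inv_mul_cancel, Equiv.Perm.one_apply]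
  have htriv : τ' = 1 := by
    refine Equiv.ext fun y => ?_
    rw [Equiv.Perm.one_apply]
    obtain ⟨m, hm⟩ := hc.sameCycle (hsupp x₀) (hsupp y)
    have hcm : τ' * σ ^ m = σ ^ m * τ' := (hcomm.zpow_right m).eq
    calc τ' y = τ' ((σ ^ m) x₀) := by rw [hm]
      _ = (σ ^ m) (τ' x₀) := by
          rw [← Equiv.Perm.mul_apply, hcm, Equiv.Perm.mul_apply]
      _ = (σ ^ m) x₀ := by rw [hfix]
      _ = y := hm
  have : τ = σ ^ k := by
    rw [hτ'] at htriv
    rw [← one_mul τ, ← mul_inv_cancel (σ ^ k), mul_assoc, htriv, mul_one]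
  exact this ▸ zpow_mem (Subgroup.mem_zpowers σ) k

/-- For a prime `p`, a subgroup `P` of order `p` in `S_p`, and `N` its
normalizer, the conjugation action induces an isomorphism `N/P ≃ (ZMod p)ˣ`; the
short exact sequence `1 → P → N → (ZMod p)ˣ → 1` is split.  We encode the
isomorphism `N/P ≃ (ZMod p)ˣ` as a surjective homomorphism `φ : N →* (ZMod p)ˣ`
with kernel `P`, induced by conjugation, together with a section. -/
theorem stmt_0 (p : ℕ) (hp : p.Prime) (P : Subgroup (Equiv.Perm (Fin p)))
    (hP : Nat.card P = p) :
    ∃ φ : ↥(Subgroup.normalizer (P : Set (Equiv.Perm (Fin p)))) →* (ZMod p)ˣ,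
      Function.Surjective φ ∧
      φ.ker = P.subgroupOf (Subgroup.normalizer (P : Set (Equiv.Perm (Fin p)))) ∧
      (∀ η : ↥(Subgroup.normalizer (P : Set (Equiv.Perm (Fin p)))), ∀ σ ∈ P,
        (η : Equiv.Perm (Fin p)) * σ * (η : Equiv.Perm (Fin p))⁻¹
          = σ ^ ((φ η : ZMod p).val)) ∧
      ∃ s : (ZMod p)ˣ →* ↥(Subgroup.normalizer (P : Set (Equiv.Perm (Fin p)))), φ.comp s = MonoidHom.id (ZMod p)ˣ := by
  haveI : Fact p.Prime := ⟨hp⟩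
  haveI : NeZero p := ⟨hp.ne_zero⟩
  -- find a generator of P
  haveI : Nontrivial P := Finite.one_lt_card_iff_nontrivial.mp (by rw [hP]; exact hp.one_lt)
  obtain ⟨g, hg1⟩ := exists_ne (1 : P)
  set σ : Perm (Fin p) := (g : Perm (Fin p)) with hσdef
  have hordg : orderOf g = p := by
    have hdvd : orderOf g ∣ p := by
      have h := orderOf_dvd_natCard g
      rwa [hP] at h
    rcases hp.eq_one_or_self_of_dvd _ hdvd with h | h
    · exact absurd (orderOf_eq_one_iff.mp h) hg1
    · exact h
  have hord : orderOf σ = p :=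
    (orderOf_injective P.subtype Subtype.coe_injective g).trans hordg
  have hPz : P = Subgroup.zpowers σ := by
    refine (Subgroup.eq_of_le_of_card_ge (Subgroup.zpowers_le.mpr g.2) ?_).symm
    rw [hP, Nat.card_zpowers, hord]
  -- the exponent function
  have hexists : ∀ η : ↥(Subgroup.normalizer (P : Set (Equiv.Perm (Fin p)))), ∃ a : ZMod p,
      (η : Perm (Fin p)) * σ * (η : Perm (Fin p))⁻¹ = σ ^ a.val := by
    intro η
    have hmem : (η : Perm (Fin p)) * σ * (η : Perm (Fin p))⁻¹ ∈ P :=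
      (Subgroup.mem_normalizer_iff.mp η.2 σ).mp g.2
    obtain ⟨a, ha⟩ := aux_exists_zmod_pow hord (hPz.le hmem)
    exact ⟨a, ha.symm⟩
  choose a ha using hexists
  have huniq : ∀ {x y : ZMod p}, σ ^ x.val = σ ^ y.val → x = y :=
    fun h => aux_pow_val_inj hord h
  have hval1 : σ ^ (1 : ZMod p).val = σ := by
    rw [ZMod.val_one, pow_one]
  -- multiplicativity
  have hmul : ∀ η₁ η₂ : ↥(Subgroup.normalizer (P : Set (Equiv.Perm (Fin p)))), a (η₁ * η₂) = a η₁ * a η₂ := by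
    intro η₁ η₂
    apply huniq
    rw [← ha (η₁ * η₂)]
    have h2 := ha η₂
    have h1 := ha η₁
    have : ((η₁ * η₂ : ↥(Subgroup.normalizer (P : Set (Equiv.Perm (Fin p))))) : Perm (Fin p)) * σ *
        ((η₁ * η₂ : ↥(Subgroup.normalizer (P : Set (Equiv.Perm (Fin p))))) : Perm (Fin p))⁻¹
        = (η₁ : Perm (Fin p)) * ((η₂ : Perm (Fin p)) * σ * (η₂ : Perm (Fin p))⁻¹) *
          (η₁ : Perm (Fin p))⁻¹ := by
      simp [mul_assoc]
    rw [this, h2, ← MulAut.conj_apply, map_pow, MulAut.conj_apply, h1, ← pow_mul]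
    rw [pow_eq_pow_iff_modEq, hord, ZMod.val_mul]
    exact (Nat.mod_modEq _ p).symm
  set m : ↥(Subgroup.normalizer (P : Set (Equiv.Perm (Fin p)))) →* ZMod p :=
    { toFun := a
      map_one' := by
        apply huniq
        rw [← ha 1, hval1]
        simp
      map_mul' := hmul } with hm
  set φ : ↥(Subgroup.normalizer (P : Set (Equiv.Perm (Fin p)))) →* (ZMod p)ˣ := m.toHomUnits with hφ
  have hcoe : ∀ η, (φ η : ZMod p) = a η := fun η => MonoidHom.coe_toHomUnits m η
  -- power formula
  have hpow : ∀ η : ↥(Subgroup.normalizer (P : Set (Equiv.Perm (Fin p)))), ∀ τ ∈ P,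
      (η : Perm (Fin p)) * τ * (η : Perm (Fin p))⁻¹ = τ ^ ((φ η : ZMod p).val) := by
    intro η τ hτ
    rw [hPz] at hτ
    rw [← mem_powers_iff_mem_zpowers] at hτ
    obtain ⟨n, rfl⟩ := hτ
    rw [hcoe, ← MulAut.conj_apply, map_pow, MulAut.conj_apply, ha η, pow_right_comm]
  -- kernel
  have hker : φ.ker = P.subgroupOf (Subgroup.normalizer (P : Set (Equiv.Perm (Fin p)))) := by
    ext η
    rw [MonoidHom.mem_ker, Subgroup.mem_subgroupOf, Units.ext_iff, hcoe]
    constructor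
    · intro h
      rw [Units.val_one] at h
      have hcomm : Commute (η : Perm (Fin p)) σ := by
        have h2 := ha η
        rw [h, hval1] at h2
        show (η : Perm (Fin p)) * σ = σ * (η : Perm (Fin p))
        conv_rhs => rw [← h2]
        group
      exact hPz.ge (aux_commute_mem_zpowers hp hord hcomm)
    · intro h
      rw [Units.val_one]
      obtain ⟨k, hk⟩ := hPz.le h
      have hk' : σ ^ k = (η : Perm (Fin p)) := hk
      apply huniq
      rw [← ha η, hval1, ← hk']
      group
  -- surjectivity
  have hsurj : Function.Surjective φ := by
    intro u
    set n : ℕ := ((u : ZMod p)).val with hn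
    have hcop : Nat.Coprime n p := ZMod.val_coe_unit_coprime u
    have hordn : orderOf (σ ^ n) = p := by
      rw [orderOf_pow, hord, Nat.Coprime.gcd_eq_one (by rwa [Nat.coprime_comm] at hcop),
        Nat.div_one]
    have hc : σ.IsCycle :=
      Equiv.Perm.isCycle_of_prime_order'' (by simpa using hp) (by simpa using hord)
    have hcn : (σ ^ n).IsCycle :=
      Equiv.Perm.isCycle_of_prime_order'' (by simpa using hp) (by simpa using hordn)
    have hconj : IsConj σ (σ ^ n) := by
      apply hc.isConj hcn
      rw [← hc.orderOf, ← hcn.orderOf, hord, hordn]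
    obtain ⟨η, hη⟩ := isConj_iff.mp hconj
    -- inverse exponent
    set n' : ℕ := ((u⁻¹ : (ZMod p)ˣ) : ZMod p).val with hn'
    have hnn' : σ ^ (n * n') = σ := by
      rw [← pow_one σ, ← pow_mul]
      rw [pow_eq_pow_iff_modEq, hord]
      have : ((n * n' : ℕ) : ZMod p) = ((1 : ℕ) : ZMod p) := by
        push_cast
        rw [hn, hn', ZMod.natCast_val, ZMod.natCast_val, ZMod.cast_id, ZMod.cast_id]
        rw [← Units.val_mul]
        simp
      rw [ZMod.natCast_eq_natCast_iff] at this
      simpa using this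
    have hηinv : η⁻¹ * σ * η = σ ^ n' := by
      have hcc : η * σ ^ n' * η⁻¹ = σ := by
        rw [← MulAut.conj_apply, map_pow, MulAut.conj_apply, hη, ← pow_mul, hnn']
      calc η⁻¹ * σ * η = η⁻¹ * (η * σ ^ n' * η⁻¹) * η := by rw [hcc]
        _ = σ ^ n' := by group
    have hmem : η ∈ (Subgroup.normalizer (P : Set (Equiv.Perm (Fin p)))) := by
      rw [Subgroup.mem_normalizer_iff]
      intro x
      rw [hPz, Subgroup.mem_zpowers_iff, Subgroup.mem_zpowers_iff]
      constructor
      · rintro ⟨k, rfl⟩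
        refine ⟨(n : ℤ) * k, ?_⟩
        rw [zpow_mul, zpow_natCast, ← hη, ← MulAut.conj_apply, ← map_zpow,
          MulAut.conj_apply]
      · rintro ⟨k, hk⟩
        have hx : x = η⁻¹ * σ ^ k * η := by rw [hk]; group
        refine ⟨(n' : ℤ) * k, ?_⟩
        have hcj : η⁻¹ * σ ^ k * η = (η⁻¹ * σ * η) ^ k := by
          rw [show η⁻¹ * σ * η = η⁻¹ * σ * η⁻¹⁻¹ by rw [inv_inv],
            ← MulAut.conj_apply, ← map_zpow, MulAut.conj_apply, inv_inv]
        rw [hx, hcj, hηinv, zpow_mul, zpow_natCast]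
    refine ⟨⟨η, hmem⟩, ?_⟩
    apply Units.ext
    rw [hcoe]
    apply huniq
    rw [← ha ⟨η, hmem⟩]
    exact hη
  -- splitting via Schur-Zassenhaus
  have hcardker : Nat.card φ.ker = p := by
    rw [hker]
    rw [Nat.card_congr (Subgroup.subgroupOfEquivOfLe Subgroup.le_normalizer).toEquiv]
    exact hP
  have hcardunits : Nat.card (ZMod p)ˣ = p - 1 := by
    rw [Nat.card_eq_fintype_card, ZMod.card_units_eq_totient, Nat.totient_prime hp]
  have hindex : φ.ker.index = p - 1 := by
    rw [Subgroup.index_ker, MonoidHom.range_eq_top.mpr hsurj]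
    rw [Nat.card_congr Subgroup.topEquiv.toEquiv]
    exact hcardunits
  have hcop : Nat.Coprime (Nat.card φ.ker) φ.ker.index := by
    rw [hcardker, hindex]
    have h : Nat.Coprime ((p-1)+1) (p-1) := by simp [Nat.coprime_self_add_left]
    have hp1 : p - 1 + 1 = p := Nat.succ_pred_eq_of_pos hp.pos
    rwa [hp1] at h
  obtain ⟨H, hH⟩ := Subgroup.exists_right_complement'_of_coprime hcop
  set ρ : ↥H →* (ZMod p)ˣ := φ.comp H.subtype with hρ
  have hinj : Function.Injective ρ := by
    rw [injective_iff_map_eq_one]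
    intro x hx
    have h1 : (x : ↥(Subgroup.normalizer (P : Set (Equiv.Perm (Fin p))))) ∈ φ.ker := hx
    have h2 : (x : ↥(Subgroup.normalizer (P : Set (Equiv.Perm (Fin p))))) ∈ H := x.2
    have := hH.disjoint.le_bot (by exact ⟨h1, h2⟩)
    exact Subtype.ext (Subgroup.mem_bot.mp this)
  have hcardH : Nat.card ↥H = Nat.card (ZMod p)ˣ := by
    have h1 := hH.card_mul
    have h2 := Subgroup.card_mul_index φ.ker
    rw [← h2] at h1
    have hpne : Nat.card φ.ker ≠ 0 := by rw [hcardker]; exact hp.ne_zero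
    have := Nat.eq_of_mul_eq_mul_left (Nat.pos_of_ne_zero hpne) h1
    rw [this, hindex, hcardunits]
  have hbij : Function.Bijective ρ :=
    (Nat.bijective_iff_injective_and_card ρ).mpr ⟨hinj, hcardH⟩
  set e : ↥H ≃* (ZMod p)ˣ := MulEquiv.ofBijective ρ hbij with he
  refine ⟨φ, hsurj, hker, hpow, H.subtype.comp e.symm.toMonoidHom, ?_⟩
  ext u
  have : φ (H.subtype (e.symm u)) = ρ (e.symm u) := rfl
  simp only [MonoidHom.comp_apply, MonoidHom.coe_comp, Function.comp_apply,
    MulEquiv.coe_toMonoidHom, MonoidHom.id_apply]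
  rw [this]
  exact congrArg Units.val (e.apply_symm_apply u)
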